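/- If two vector bundles over the same base manifold admit trivializing covers over the same open cover with identical transition functions, then they are isomorphic as vector bundles; in particular, since T²M (with the connection-induced trivializations) and TM × TM are both characterized by the cocycle {(dσ_{αβ} ∘ ψ_β) × (dσ_{αβ} ∘ ψ_β)}, they are isomorphic. -/

import Mathlib

open Bundle

/-- two vector bundles over the same base admitting trivializing covers
over the same open cover with identical transition functions are isomorphic as vector
bundles (there is a fiberwise continuous-linear-equivalence which is a homeomorphism of
total spaces).  This is the principle by which `T²M`, with the connection-induced
trivializations, is isomorphic to `TM × TM`: both are characterized by the cocycle
`{(dσ_{αβ} ∘ ψ_β) × (dσ_{αβ} ∘ ψ_β)}`. -/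
theorem vectorBundle_iso_of_same_transitions
    {B F : Type*} [TopologicalSpace B] [NormedAddCommGroup F] [NormedSpace ℝ F]
    (E₁ E₂ : B → Type*)
    [∀ b, AddCommGroup (E₁ b)] [∀ b, Module ℝ (E₁ b)] [∀ b, TopologicalSpace (E₁ b)]
    [TopologicalSpace (TotalSpace F E₁)] [FiberBundle F E₁] [VectorBundle ℝ F E₁]
    [∀ b, AddCommGroup (E₂ b)] [∀ b, Module ℝ (E₂ b)] [∀ b, TopologicalSpace (E₂ b)]
    [TopologicalSpace (TotalSpace F E₂)] [FiberBundle F E₂] [VectorBundle ℝ F E₂]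
    {ι : Type*}
    (e₁ : ι → Trivialization F (TotalSpace.proj : TotalSpace F E₁ → B))
    (e₂ : ι → Trivialization F (TotalSpace.proj : TotalSpace F E₂ → B))
    (he₁ : ∀ α, (e₁ α).IsLinear ℝ) (he₂ : ∀ α, (e₂ α).IsLinear ℝ)
    (hbase : ∀ α, (e₁ α).baseSet = (e₂ α).baseSet)
    (hcover : ∀ b : B, ∃ α, b ∈ (e₁ α).baseSet)
    (htrans : ∀ α β, ∀ b ∈ (e₁ α).baseSet ∩ (e₁ β).baseSet, ∀ v : F,
      (e₁ α ⟨b, (e₁ β).symm b v⟩).2 = (e₂ α ⟨b, (e₂ β).symm b v⟩).2) :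
    ∃ φ : ∀ b, E₁ b ≃L[ℝ] E₂ b,
      Continuous (fun p : TotalSpace F E₁ => (⟨p.1, φ p.1 p.2⟩ : TotalSpace F E₂)) ∧
        Continuous (fun p : TotalSpace F E₂ =>
          (⟨p.1, (φ p.1).symm p.2⟩ : TotalSpace F E₁)) := by
  classical
  choose idx hidx using hcover
  have h2 : ∀ b, b ∈ (e₂ (idx b)).baseSet := fun b => (hbase (idx b)) ▸ hidx b
  have h2' : ∀ α b, b ∈ (e₁ α).baseSet → b ∈ (e₂ α).baseSet := fun α b h => (hbase α) ▸ h
  let φ : ∀ b, E₁ b ≃L[ℝ] E₂ b := fun b =>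
    letI := he₁ (idx b); letI := he₂ (idx b)
    ((e₁ (idx b)).continuousLinearEquivAt ℝ b (hidx b)).trans
      ((e₂ (idx b)).continuousLinearEquivAt ℝ b (h2 b)).symm
  have key : ∀ α b (h1 : b ∈ (e₁ α).baseSet) (w : E₁ b),
      letI := he₁ α; letI := he₂ α
      φ b w = ((e₂ α).continuousLinearEquivAt ℝ b (h2' α b h1)).symm
        ((e₁ α).continuousLinearEquivAt ℝ b h1 w) := by
    intro α b h1 w
    letI := he₁ α; letI := he₂ α; letI := he₁ (idx b); letI := he₂ (idx b)
    rw [ContinuousLinearEquiv.eq_symm_apply]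
    have h := htrans α (idx b) b ⟨h1, hidx b⟩ ((e₁ (idx b)) ⟨b, w⟩).2
    rw [(e₁ (idx b)).symm_apply_apply_mk (hidx b) w] at h
    simp only [φ, ContinuousLinearEquiv.trans_apply,
      Trivialization.continuousLinearEquivAt_apply,
      Trivialization.continuousLinearEquivAt_symm_apply]
    exact h.symm
  have key' : ∀ α b (h1 : b ∈ (e₁ α).baseSet) (w : E₂ b),
      letI := he₁ α; letI := he₂ α
      (φ b).symm w = ((e₁ α).continuousLinearEquivAt ℝ b h1).symm
        (((e₂ α).continuousLinearEquivAt ℝ b (h2' α b h1)) w) := by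
    intro α b h1 w
    letI := he₁ α; letI := he₂ α
    rw [ContinuousLinearEquiv.symm_apply_eq, key α b h1, ContinuousLinearEquiv.apply_symm_apply]
    exact (ContinuousLinearEquiv.symm_apply_apply _ _).symm
  refine ⟨φ, ?_, ?_⟩
  · rw [continuous_iff_continuousAt]
    intro p
    set α := idx p.1 with hα
    letI := he₁ α; letI := he₂ α
    have hopen : IsOpen (e₁ α).source := (e₁ α).open_source
    have hmem : p ∈ (e₁ α).source := (e₁ α).mem_source.2 (hidx p.1)
    have hcont : ContinuousOn
        (fun q : TotalSpace F E₁ => (e₂ α).toOpenPartialHomeomorph.symm ((e₁ α) q))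
        (e₁ α).source := by
      refine (e₂ α).toOpenPartialHomeomorph.continuousOn_symm.comp (e₁ α).continuousOn fun q hq => ?_
      rw [(e₂ α).target_eq, ← hbase α, ← (e₁ α).target_eq]
      exact (e₁ α).map_source hq
    have heq : ∀ q ∈ (e₁ α).source,
        (⟨q.1, φ q.1 q.2⟩ : TotalSpace F E₂) = (e₂ α).toOpenPartialHomeomorph.symm ((e₁ α) q) := by
      intro q hq
      have hq1 : q.1 ∈ (e₁ α).baseSet := (e₁ α).mem_source.1 hq
      have : (e₁ α) q = (q.1, (e₁ α).continuousLinearEquivAt ℝ q.1 hq1 q.2) :=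
        (e₁ α).apply_eq_prod_continuousLinearEquivAt ℝ q.1 hq1 q.2
      rw [this, Trivialization.symm_apply_eq_mk_continuousLinearEquivAt_symm (R := ℝ) (e₂ α) q.1 (h2' α q.1 hq1),
        key α q.1 hq1]
    exact ((hcont.congr heq).continuousAt (hopen.mem_nhds hmem))
  · rw [continuous_iff_continuousAt]
    intro p
    set α := idx p.1 with hα
    letI := he₁ α; letI := he₂ α
    have hopen : IsOpen (e₂ α).source := (e₂ α).open_source
    have hmem : p ∈ (e₂ α).source := (e₂ α).mem_source.2 (h2 p.1)
    have hcont : ContinuousOn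
        (fun q : TotalSpace F E₂ => (e₁ α).toOpenPartialHomeomorph.symm ((e₂ α) q))
        (e₂ α).source := by
      refine (e₁ α).toOpenPartialHomeomorph.continuousOn_symm.comp (e₂ α).continuousOn fun q hq => ?_
      rw [(e₁ α).target_eq, hbase α, ← (e₂ α).target_eq]
      exact (e₂ α).map_source hq
    have heq : ∀ q ∈ (e₂ α).source,
        (⟨q.1, (φ q.1).symm q.2⟩ : TotalSpace F E₁) =
          (e₁ α).toOpenPartialHomeomorph.symm ((e₂ α) q) := by
      intro q hq
      have hq2 : q.1 ∈ (e₂ α).baseSet := (e₂ α).mem_source.1 hq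
      have hq1 : q.1 ∈ (e₁ α).baseSet := (hbase α) ▸ hq2
      have : (e₂ α) q = (q.1, (e₂ α).continuousLinearEquivAt ℝ q.1 hq2 q.2) :=
        (e₂ α).apply_eq_prod_continuousLinearEquivAt ℝ q.1 hq2 q.2
      rw [this, Trivialization.symm_apply_eq_mk_continuousLinearEquivAt_symm (R := ℝ) (e₁ α) q.1 hq1,
        key' α q.1 hq1]
    exact ((hcont.congr heq).continuousAt (hopen.mem_nhds hmem))
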